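/- Well-definedness of the canonical neighborhood condition: let Λ be a proof system extending M^Δ and s a maximal Λ-consistent set. If |φ| = |φ'| (i.e. φ and φ' belong to exactly the same maximal Λ-consistent sets), then (Δ(φ ∨ ψ) ∈ s for every formula ψ) if and only if (Δ(φ' ∨ ψ) ∈ s for every formula ψ). -/

import Mathlib

/-- The language L(Δ) of contingency logic: φ ::= p | ¬φ | (φ ∧ φ) | Δφ. -/
inductive Formula (P : Type) : Type
  | atom : P → Formula P
  | neg : Formula P → Formula P
  | and : Formula P → Formula P → Formula P
  | delta : Formula P → Formula P

namespace Formula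

variable {P : Type}

/-- φ ∨ ψ abbreviates ¬(¬φ ∧ ¬ψ). -/
def or (φ ψ : Formula P) : Formula P := neg (and (neg φ) (neg ψ))

/-- φ → ψ abbreviates ¬(φ ∧ ¬ψ). -/
def imp (φ ψ : Formula P) : Formula P := neg (and φ (neg ψ))

/-- φ ↔ ψ abbreviates (φ → ψ) ∧ (ψ → φ). -/
def iffF (φ ψ : Formula P) : Formula P := and (imp φ ψ) (imp ψ φ)

end Formula

/-- ⊤ : a fixed tautology (p ∨ ¬p for a fixed propositional variable p). -/
noncomputable def Formula.top (P : Type) [Nonempty P] : Formula P :=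
  Formula.or (Formula.atom (Classical.arbitrary P))
    (Formula.neg (Formula.atom (Classical.arbitrary P)))

/-- A neighborhood model ⟨S, N, V⟩: a nonempty set of states `S`, a neighborhood
function `N : S → P(P(S))` and a valuation `V`. -/
structure NbhdModel (P : Type) where
  S : Type
  nonempty : Nonempty S
  N : S → Set (Set S)
  V : P → Set S

/-- The truth set ⟦φ⟧ of a formula in a neighborhood model; the clause for `Δφ` says
that a state `s` satisfies `Δφ` iff ⟦φ⟧ ∈ N(s) or S ∖ ⟦φ⟧ ∈ N(s). -/
def NbhdModel.truthSet {P : Type} (M : NbhdModel P) : Formula P → Set M.S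
  | .atom p => M.V p
  | .neg φ => (M.truthSet φ)ᶜ
  | .and φ ψ => M.truthSet φ ∩ M.truthSet ψ
  | .delta φ => {s | M.truthSet φ ∈ M.N s ∨ (M.truthSet φ)ᶜ ∈ M.N s}

/-- Satisfaction: M,s ⊨ φ. -/
def NbhdModel.sat {P : Type} (M : NbhdModel P) (s : M.S) (φ : Formula P) : Prop :=
  s ∈ M.truthSet φ

/-- Frame property (m): closure under supersets. -/
def SupersetClosed {S : Type} (N : S → Set (Set S)) : Prop :=
  ∀ s : S, ∀ X Y : Set S, X ∈ N s → X ⊆ Y → Y ∈ N s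

/-- Frame property (c): closure under binary intersections. -/
def InterClosed {S : Type} (N : S → Set (Set S)) : Prop :=
  ∀ s : S, ∀ X Y : Set S, X ∈ N s → Y ∈ N s → X ∩ Y ∈ N s

/-- Frame property (n): contains the unit. -/
def ContainsUnit {S : Type} (N : S → Set (Set S)) : Prop :=
  ∀ s : S, (Set.univ : Set S) ∈ N s

/-- Frame property (z): closure under complements. -/
def ComplClosed {S : Type} (N : S → Set (Set S)) : Prop :=
  ∀ s : S, ∀ X : Set S, X ∈ N s → Xᶜ ∈ N s

/-- The supplementation of a neighborhood function:
`N⁺(s) = {X ⊆ S : Y ⊆ X for some Y ∈ N(s)}`. -/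
def suppN {S : Type} (N : S → Set (Set S)) (s : S) : Set (Set S) :=
  {X | ∃ Y ∈ N s, Y ⊆ X}

/-- `φ` is a substitution instance of a propositional tautology: every Boolean valuation
of formulas that respects `¬` and `∧` (treating atoms and Δ-formulas as atomic) makes
`φ` true. -/
def Tautology {P : Type} (φ : Formula P) : Prop :=
  ∀ v : Formula P → Bool,
    (∀ ψ, v (Formula.neg ψ) = !(v ψ)) →
    (∀ ψ χ, v (Formula.and ψ χ) = (v ψ && v χ)) →
    v φ = true

/-- A proof system of contingency logic, given by its set of theorems: it contains all
propositional tautologies and is closed under modus ponens and the rule REΔ. -/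
structure Sys (P : Type) where
  thm : Set (Formula P)
  taut : ∀ φ : Formula P, Tautology φ → φ ∈ thm
  mp : ∀ φ ψ : Formula P, Formula.imp φ ψ ∈ thm → φ ∈ thm → ψ ∈ thm
  re : ∀ φ ψ : Formula P, Formula.iffF φ ψ ∈ thm →
         Formula.iffF (Formula.delta φ) (Formula.delta ψ) ∈ thm

/-- The system contains the axiom ΔEqu: Δφ ↔ Δ¬φ. -/
def HasDeltaEqu {P : Type} (Λ : Sys P) : Prop :=
  ∀ φ : Formula P,
    Formula.iffF (Formula.delta φ) (Formula.delta (Formula.neg φ)) ∈ Λ.thm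

/-- The system contains the axiom ΔM: Δφ → Δ(φ ∨ ψ) ∨ Δ(¬φ ∨ χ). -/
def HasDeltaM {P : Type} (Λ : Sys P) : Prop :=
  ∀ φ ψ χ : Formula P,
    Formula.imp (Formula.delta φ)
      (Formula.or (Formula.delta (Formula.or φ ψ))
                  (Formula.delta (Formula.or (Formula.neg φ) χ))) ∈ Λ.thm

/-- The system contains the axiom ΔC: (Δφ ∧ Δψ) → Δ(φ ∧ ψ). -/
def HasDeltaC {P : Type} (Λ : Sys P) : Prop :=
  ∀ φ ψ : Formula P,
    Formula.imp (Formula.and (Formula.delta φ) (Formula.delta ψ))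
      (Formula.delta (Formula.and φ ψ)) ∈ Λ.thm

/-- Derivability of `φ` from premises `Γ` in the system `Λ`. -/
inductive SDerivFrom {P : Type} (Λ : Sys P) (Γ : Set (Formula P)) : Formula P → Prop
  | mem {φ} (h : φ ∈ Γ) : SDerivFrom Λ Γ φ
  | thm {φ} (h : φ ∈ Λ.thm) : SDerivFrom Λ Γ φ
  | mp {φ ψ} (h1 : SDerivFrom Λ Γ (Formula.imp φ ψ)) (h2 : SDerivFrom Λ Γ φ) :
      SDerivFrom Λ Γ ψ

/-- `Γ` is Λ-consistent. -/
def SConsistent {P : Type} (Λ : Sys P) (Γ : Set (Formula P)) : Prop :=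
  ¬ ∃ φ : Formula P, SDerivFrom Λ Γ φ ∧ SDerivFrom Λ Γ (Formula.neg φ)

/-- `s` is a maximal Λ-consistent set of formulas. -/
def MCS {P : Type} (Λ : Sys P) (s : Set (Formula P)) : Prop :=
  SConsistent Λ s ∧ ∀ φ : Formula P, φ ∈ s ∨ Formula.neg φ ∈ s

/-- The proof set |φ| = {s ∈ S^Λ : φ ∈ s}, where S^Λ is the set of maximal
Λ-consistent sets. -/
def proofSet {P : Type} (Λ : Sys P) (φ : Formula P) :
    Set {s : Set (Formula P) // MCS Λ s} :=
  {s | φ ∈ s.val}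

/-- The neighborhood function of the minimal canonical model:
N₀^Λ(s) = { |φ| : Δ(φ ∨ ψ) ∈ s for every formula ψ }. -/
def minN {P : Type} (Λ : Sys P) (s : {s : Set (Formula P) // MCS Λ s}) :
    Set (Set {s : Set (Formula P) // MCS Λ s}) :=
  {X | ∃ φ : Formula P,
     X = proofSet Λ φ ∧ ∀ ψ : Formula P, Formula.delta (Formula.or φ ψ) ∈ s.val}

namespace CanonAux

variable {P : Type} {Λ : Sys P}

theorem deriv_empty_thm {φ : Formula P} (h : SDerivFrom Λ ∅ φ) : φ ∈ Λ.thm := by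
  induction h with
  | mem h => exact absurd h (Set.notMem_empty _)
  | thm h => exact h
  | mp h1 h2 ih1 ih2 => exact Λ.mp _ _ ih1 ih2

theorem mono_deriv {Γ Γ' : Set (Formula P)} {φ : Formula P} (hsub : Γ ⊆ Γ')
    (h : SDerivFrom Λ Γ φ) : SDerivFrom Λ Γ' φ := by
  induction h with
  | mem h => exact SDerivFrom.mem (hsub h)
  | thm h => exact SDerivFrom.thm h
  | mp h1 h2 ih1 ih2 => exact SDerivFrom.mp ih1 ih2

theorem deduction {Γ : Set (Formula P)} {φ ψ : Formula P}
    (h : SDerivFrom Λ (insert φ Γ) ψ) : SDerivFrom Λ Γ (Formula.imp φ ψ) := by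
  induction h with
  | @mem χ h =>
    rcases Set.mem_insert_iff.mp h with h | h
    · subst h
      exact SDerivFrom.thm (Λ.taut _ (by
        intro v hn ha
        simp only [Formula.imp, hn, ha]
        cases v χ <;> rfl))
    · exact SDerivFrom.mp (SDerivFrom.thm (Λ.taut _ (by
        intro v hn ha
        simp only [Formula.imp, hn, ha]
        cases v χ <;> cases v φ <;> rfl))) (SDerivFrom.mem h)
  | @thm χ h =>
    exact SDerivFrom.mp (SDerivFrom.thm (Λ.taut _ (by
      intro v hn ha
      simp only [Formula.imp, hn, ha]
      cases v χ <;> cases v φ <;> rfl))) (SDerivFrom.thm h)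
  | @mp χ ρ h1 h2 ih1 ih2 =>
    exact SDerivFrom.mp (SDerivFrom.mp (SDerivFrom.thm (Λ.taut _ (by
      intro v hn ha
      simp only [Formula.imp, hn, ha]
      cases v χ <;> cases v ρ <;> cases v φ <;> rfl))) ih1) ih2

/-- If `insert φ Γ` is inconsistent then `Γ ⊢ ¬φ`. -/
theorem neg_of_inconsistent {Γ : Set (Formula P)} {φ χ : Formula P}
    (h1 : SDerivFrom Λ (insert φ Γ) χ)
    (h2 : SDerivFrom Λ (insert φ Γ) (Formula.neg χ)) :
    SDerivFrom Λ Γ (Formula.neg φ) := by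
  have d1 := deduction h1
  have d2 := deduction h2
  exact SDerivFrom.mp (SDerivFrom.mp (SDerivFrom.thm (Λ.taut _ (by
    intro v hn ha
    simp only [Formula.imp, hn, ha]
    cases v χ <;> cases v φ <;> rfl))) d1) d2

/-- Derivations use finitely many premises. -/
theorem finite_premises {Γ : Set (Formula P)} {φ : Formula P}
    (h : SDerivFrom Λ Γ φ) :
    ∃ Γ₀ : Set (Formula P), Γ₀ ⊆ Γ ∧ Γ₀.Finite ∧ SDerivFrom Λ Γ₀ φ := by
  induction h with
  | @mem χ h =>
    exact ⟨{χ}, Set.singleton_subset_iff.mpr h, Set.finite_singleton _,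
      SDerivFrom.mem rfl⟩
  | @thm χ h => exact ⟨∅, Set.empty_subset _, Set.finite_empty, SDerivFrom.thm h⟩
  | mp h1 h2 ih1 ih2 =>
    obtain ⟨Γ₁, hs1, hf1, hd1⟩ := ih1
    obtain ⟨Γ₂, hs2, hf2, hd2⟩ := ih2
    refine ⟨Γ₁ ∪ Γ₂, Set.union_subset hs1 hs2, hf1.union hf2, ?_⟩
    have m1 : SDerivFrom Λ (Γ₁ ∪ Γ₂) _ := mono_deriv (Set.subset_union_left) hd1
    exact SDerivFrom.mp m1 (mono_deriv (Set.subset_union_right) hd2)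

theorem consistent_of_subset {Γ Γ' : Set (Formula P)} (hsub : Γ ⊆ Γ')
    (h : SConsistent Λ Γ') : SConsistent Λ Γ := by
  intro ⟨χ, h1, h2⟩
  exact h ⟨χ, mono_deriv hsub h1, mono_deriv hsub h2⟩

/-- Finite subsets of a union of a chain are contained in a member. -/
theorem chain_finite_subset {c : Set (Set (Formula P))} (hc : IsChain (· ⊆ ·) c)
    (hne : c.Nonempty) {Γ₀ : Set (Formula P)} (hf : Γ₀.Finite) (hsub : Γ₀ ⊆ ⋃₀ c) :
    ∃ s ∈ c, Γ₀ ⊆ s := by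
  refine Set.Finite.induction_on
    (motive := fun t _ => t ⊆ ⋃₀ c → ∃ s ∈ c, t ⊆ s) Γ₀ hf ?_ ?_ hsub
  · intro _
    exact ⟨hne.choose, hne.choose_spec, Set.empty_subset _⟩
  · intro a t _ _ ih hsub'
    obtain ⟨s1, hs1, hts1⟩ := ih (Set.Subset.trans (Set.subset_insert _ _) hsub')
    obtain ⟨s2, hs2, has2⟩ := hsub' (Set.mem_insert a t)
    rcases hc.total hs1 hs2 with h | h
    · exact ⟨s2, hs2, Set.insert_subset has2 (hts1.trans h)⟩
    · exact ⟨s1, hs1, Set.insert_subset (h has2) hts1⟩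

/-- Lindenbaum's lemma. -/
theorem lindenbaum {Γ : Set (Formula P)} (h : SConsistent Λ Γ) :
    ∃ m : Set (Formula P), Γ ⊆ m ∧ MCS Λ m := by
  have hZ : ∀ c ⊆ {t : Set (Formula P) | SConsistent Λ t},
      IsChain (· ⊆ ·) c → c.Nonempty →
      ∃ ub ∈ {t : Set (Formula P) | SConsistent Λ t}, ∀ s ∈ c, s ⊆ ub := by
    intro c hcS hchain hcne
    refine ⟨⋃₀ c, ?_, fun s hs => Set.subset_sUnion_of_mem hs⟩
    intro ⟨χ, h1, h2⟩
    obtain ⟨Γ₁, hs1, hf1, hd1⟩ := finite_premises h1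
    obtain ⟨Γ₂, hs2, hf2, hd2⟩ := finite_premises h2
    obtain ⟨s, hsc, hss⟩ := chain_finite_subset hchain hcne (hf1.union hf2)
      (Set.union_subset hs1 hs2)
    exact hcS hsc ⟨χ,
      mono_deriv ((Set.subset_union_left).trans hss) hd1,
      mono_deriv ((Set.subset_union_right).trans hss) hd2⟩
  obtain ⟨m, hΓm, hm⟩ := zorn_subset_nonempty
    {t : Set (Formula P) | SConsistent Λ t} hZ Γ h
  · refine ⟨m, hΓm, hm.1, ?_⟩
    intro φ
    by_contra hcon
    push_neg at hcon
    obtain ⟨h1, h2⟩ := hcon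
    have i1 : ¬ SConsistent Λ (insert φ m) := by
      intro hcons
      exact h1 (hm.2 hcons (Set.subset_insert _ _) (Set.mem_insert _ _))
    have i2 : ¬ SConsistent Λ (insert (Formula.neg φ) m) := by
      intro hcons
      exact h2 (hm.2 hcons (Set.subset_insert _ _) (Set.mem_insert _ _))
    rw [SConsistent, not_not] at i1 i2
    obtain ⟨χ1, a1, b1⟩ := i1
    obtain ⟨χ2, a2, b2⟩ := i2
    exact hm.1 ⟨Formula.neg φ, neg_of_inconsistent a1 b1, neg_of_inconsistent a2 b2⟩

theorem mcs_closed {s : Set (Formula P)} (hs : MCS Λ s) {φ : Formula P}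
    (h : SDerivFrom Λ s φ) : φ ∈ s := by
  rcases hs.2 φ with h' | h'
  · exact h'
  · exact absurd ⟨φ, h, SDerivFrom.mem h'⟩ hs.1

/-- If every MCS containing φ contains φ', then φ → φ' is a theorem. -/
theorem imp_thm_of_proofSet_subset {φ φ' : Formula P}
    (h : ∀ t : Set (Formula P), MCS Λ t → φ ∈ t → φ' ∈ t) :
    Formula.imp φ φ' ∈ Λ.thm := by
  by_contra hni
  have hcons : SConsistent Λ (insert (Formula.neg φ') ({φ} : Set (Formula P))) := by
    intro hinc
    obtain ⟨χ, c1, c2⟩ := hinc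
    have d : SDerivFrom Λ ({φ} : Set (Formula P)) (Formula.neg (Formula.neg φ')) :=
      neg_of_inconsistent c1 c2
    have d2 : SDerivFrom Λ (∅ : Set (Formula P))
        (Formula.imp φ (Formula.neg (Formula.neg φ'))) := by
      apply deduction
      simpa using d
    have hthm := deriv_empty_thm d2
    have taut : Formula.imp (Formula.imp φ (Formula.neg (Formula.neg φ')))
        (Formula.imp φ φ') ∈ Λ.thm := Λ.taut _ (by
      intro v hn ha
      simp only [Formula.imp, hn, ha]
      cases v φ <;> cases v φ' <;> rfl)
    exact hni (Λ.mp _ _ taut hthm)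
  obtain ⟨m, hsub, hm⟩ := lindenbaum hcons
  have hφ : φ ∈ m := hsub (Set.mem_insert_of_mem _ rfl)
  have hφ' : φ' ∈ m := h m hm hφ
  have hnφ' : Formula.neg φ' ∈ m := hsub (Set.mem_insert _ _)
  exact hm.1 ⟨φ', SDerivFrom.mem hφ', SDerivFrom.mem hnφ'⟩

theorem main_dir (Λ : Sys P) (s : Set (Formula P)) (hs : MCS Λ s)
    (φ φ' : Formula P) (h : proofSet Λ φ = proofSet Λ φ')
    (hall : ∀ ψ : Formula P, Formula.delta (Formula.or φ ψ) ∈ s) :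
    ∀ ψ : Formula P, Formula.delta (Formula.or φ' ψ) ∈ s := by
  have himp : Formula.imp φ φ' ∈ Λ.thm := by
    apply imp_thm_of_proofSet_subset
    intro t ht hφ
    have : (⟨t, ht⟩ : {u : Set (Formula P) // MCS Λ u}) ∈ proofSet Λ φ := hφ
    rw [h] at this
    exact this
  have himp' : Formula.imp φ' φ ∈ Λ.thm := by
    apply imp_thm_of_proofSet_subset
    intro t ht hφ
    have : (⟨t, ht⟩ : {u : Set (Formula P) // MCS Λ u}) ∈ proofSet Λ φ' := hφ
    rw [← h] at this
    exact this
  have hiff : Formula.iffF φ φ' ∈ Λ.thm := by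
    have t1 : Formula.imp (Formula.imp φ φ')
        (Formula.imp (Formula.imp φ' φ) (Formula.iffF φ φ')) ∈ Λ.thm := Λ.taut _ (by
      intro v hn ha
      simp only [Formula.imp, Formula.iffF, hn, ha]
      cases v φ <;> cases v φ' <;> rfl)
    exact Λ.mp _ _ (Λ.mp _ _ t1 himp) himp'
  intro ψ
  have horiff : Formula.iffF (Formula.or φ ψ) (Formula.or φ' ψ) ∈ Λ.thm := by
    have t1 : Formula.imp (Formula.iffF φ φ')
        (Formula.iffF (Formula.or φ ψ) (Formula.or φ' ψ)) ∈ Λ.thm := Λ.taut _ (by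
      intro v hn ha
      simp only [Formula.imp, Formula.iffF, Formula.or, hn, ha]
      cases v φ <;> cases v φ' <;> cases v ψ <;> rfl)
    exact Λ.mp _ _ t1 hiff
  have hdel := Λ.re _ _ horiff
  have hext : Formula.imp
      (Formula.iffF (Formula.delta (Formula.or φ ψ)) (Formula.delta (Formula.or φ' ψ)))
      (Formula.imp (Formula.delta (Formula.or φ ψ)) (Formula.delta (Formula.or φ' ψ)))
      ∈ Λ.thm := Λ.taut _ (by
    intro v hn ha
    simp only [Formula.imp, Formula.iffF, hn, ha]
    cases v (Formula.delta (Formula.or φ ψ)) <;>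
      cases v (Formula.delta (Formula.or φ' ψ)) <;> rfl)
  have himpd := Λ.mp _ _ hext hdel
  exact mcs_closed hs (SDerivFrom.mp (SDerivFrom.thm himpd) (SDerivFrom.mem (hall ψ)))

end CanonAux

/-- well-definedness of the canonical neighborhood condition: for any
proof system Λ extending M^Δ and any maximal Λ-consistent set s, if |φ| = |φ'| then
(Δ(φ ∨ ψ) ∈ s for every ψ) iff (Δ(φ' ∨ ψ) ∈ s for every ψ). -/
theorem canonical_condition_well_defined {P : Type} (Λ : Sys P)
    (hequ : HasDeltaEqu Λ) (hdm : HasDeltaM Λ)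
    (s : Set (Formula P)) (hs : MCS Λ s) (φ φ' : Formula P)
    (h : proofSet Λ φ = proofSet Λ φ') :
    (∀ ψ : Formula P, Formula.delta (Formula.or φ ψ) ∈ s) ↔
    (∀ ψ : Formula P, Formula.delta (Formula.or φ' ψ) ∈ s) := by
  constructor
  · exact CanonAux.main_dir Λ s hs φ φ' h
  · exact CanonAux.main_dir Λ s hs φ' φ h.symm
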